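/- Let R be a commutative ring, let C be a chain complex of R-modules each of which is flat, and suppose C is acyclic. If M is an R-module admitting a finite projective resolution 0 → Pₙ → ⋯ → P₁ → M → 0, then the chain complex C ⊗_R M is acyclic. -/

import Mathlib

open CategoryTheory MonoidalCategory

section Aux

open CategoryTheory Limits

private lemma aux_flat_exactAt {R : Type} [CommRing R] {ι : Type} {c : ComplexShape ι}
    (K : HomologicalComplex (ModuleCat R) c) (M : ModuleCat R) [Module.Flat R M]
    {i : ι} (h : K.ExactAt i) :
    (((tensorRight M).mapHomologicalComplex c).obj K).ExactAt i := by
  rw [HomologicalComplex.exactAt_iff] at h ⊢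
  have e : (((tensorRight M).mapHomologicalComplex c).obj K).sc i ≅
      (K.sc i).map (tensorRight M) :=
    ShortComplex.isoMk (Iso.refl _) (Iso.refl _) (Iso.refl _) (by simp; rfl) (by simp; rfl)
  exact ShortComplex.exact_of_iso e.symm (Module.Flat.rTensor_shortComplex_exact M _ h)

private lemma aux_ses_exactAt {A : Type*} [Category A] [Abelian A] {ι : Type}
    {c : ComplexShape ι}
    {S : ShortComplex (HomologicalComplex A c)} (hS : S.ShortExact)
    (h1 : ∀ i, S.X₁.ExactAt i) (h2 : ∀ i, S.X₂.ExactAt i) (i : ι) : S.X₃.ExactAt i := by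
  have z1 : ∀ j, IsZero (S.X₁.homology j) := fun j =>
    (HomologicalComplex.exactAt_iff_isZero_homology _ _).1 (h1 j)
  have z2 : ∀ j, IsZero (S.X₂.homology j) := fun j =>
    (HomologicalComplex.exactAt_iff_isZero_homology _ _).1 (h2 j)
  rw [HomologicalComplex.exactAt_iff_isZero_homology]
  by_cases h : c.Rel i (c.next i)
  · have e := hS.homology_exact₃ i (c.next i) h
    exact e.isZero_X₂ ((z2 i).eq_of_src _ _) ((z1 (c.next i)).eq_of_tgt _ _)
  · have := hS.epi_g
    have : Epi (HomologicalComplex.homologyMap S.g i) := by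
      apply HomologicalComplex.epi_homologyMap_of_epi_of_not_rel
      intro j hj
      exact h (by rwa [c.next_eq' hj])
    have hz : HomologicalComplex.homologyMap S.g i = 0 := (z2 i).eq_of_src _ _
    rw [IsZero.iff_id_eq_zero, ← cancel_epi (HomologicalComplex.homologyMap S.g i), hz]
    simp

private lemma aux_tensor_ses {R : Type} [CommRing R] {ι : Type} {c : ComplexShape ι}
    (K : HomologicalComplex (ModuleCat R) c)
    (hflat : ∀ i : ι, Module.Flat R (K.X i))
    {N P0 M : ModuleCat R} (f : N ⟶ P0) (g : P0 ⟶ M) (w : f ≫ g = 0)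
    (hS : (ShortComplex.mk f g w).ShortExact)
    (hN : ∀ i, (((tensorRight N).mapHomologicalComplex c).obj K).ExactAt i)
    (hP : ∀ i, (((tensorRight P0).mapHomologicalComplex c).obj K).ExactAt i) :
    ∀ i, (((tensorRight M).mapHomologicalComplex c).obj K).ExactAt i := by
  have hw : ((tensoringRight (ModuleCat R)).map f ≫ (tensoringRight (ModuleCat R)).map g) = 0 := by
    rw [← Functor.map_comp, w, Functor.map_zero]
  let T : ShortComplex (HomologicalComplex (ModuleCat R) c) := ShortComplex.mk
    ((NatTrans.mapHomologicalComplex ((tensoringRight (ModuleCat R)).map f) c).app K)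
    ((NatTrans.mapHomologicalComplex ((tensoringRight (ModuleCat R)).map g) c).app K)
    (by rw [← NatTrans.comp_app, ← NatTrans.mapHomologicalComplex_comp, hw]; rfl)
  have hT : T.ShortExact := by
    apply HomologicalComplex.shortExact_of_degreewise_shortExact
    intro i
    have := hflat i
    refine ShortComplex.ShortExact.mk' ?_ ?_ ?_
    · exact Module.Flat.lTensor_shortComplex_exact (M := K.X i) (ShortComplex.mk f g w) hS.exact
    · rw [ModuleCat.mono_iff_injective]
      exact Module.Flat.lTensor_preserves_injective_linearMap (M := K.X i) f.hom hS.moduleCat_injective_f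
    · rw [ModuleCat.epi_iff_surjective]
      exact LinearMap.lTensor_surjective _ hS.moduleCat_surjective_g
  exact aux_ses_exactAt hT hN hP

private lemma aux_key {R : Type} [CommRing R] {ι : Type} {c : ComplexShape ι}
    (K : HomologicalComplex (ModuleCat R) c)
    (hflat : ∀ i : ι, Module.Flat R (K.X i))
    (hacyclic : ∀ i : ι, K.ExactAt i) :
    ∀ (n : ℕ) (M : ModuleCat R) (P : ℕ → ModuleCat R),
      (∀ i, Module.Projective R (P i)) → (∀ i, n ≤ i → Subsingleton (P i)) →
      ∀ (d : ∀ i, P (i + 1) ⟶ P i) (ε : P 0 ⟶ M), Function.Surjective ⇑ε →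
      Function.Exact ⇑(d 0) ⇑ε → (∀ i, Function.Exact ⇑(d (i + 1)) ⇑(d i)) →
      ∀ i : ι, (((tensorRight M).mapHomologicalComplex c).obj K).ExactAt i := by
  intro n
  induction n with
  | zero =>
    intro M P _ hbound d ε hsurj _ _ i
    have : Subsingleton (P 0) := hbound 0 (le_refl 0)
    have : Subsingleton M := hsurj.subsingleton
    have : Module.Flat R M := inferInstance
    exact aux_flat_exactAt K M (hacyclic i)
  | succ n ih =>
    intro M P hproj hbound d ε hsurj hex0 hex
    -- the kernel of ε
    let N : ModuleCat R := ModuleCat.of R (LinearMap.ker ε.hom)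
    let f : N ⟶ P 0 := ModuleCat.ofHom (LinearMap.ker ε.hom).subtype
    have w : f ≫ ε = 0 := by
      ext x
      exact x.2
    have hS : (ShortComplex.mk f ε w).ShortExact := by
      refine ShortComplex.ShortExact.mk' ?_ ?_ ?_
      · rw [ShortComplex.moduleCat_exact_iff_range_eq_ker]
        exact Submodule.range_subtype _
      · rw [ModuleCat.mono_iff_injective]
        exact Subtype.val_injective
      · rw [ModuleCat.epi_iff_surjective]
        exact hsurj
    -- the truncated resolution, resolving N
    have hmem : ∀ x : P 1, d 0 x ∈ LinearMap.ker ε.hom := fun x =>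
      (hex0 (d 0 x)).mpr ⟨x, rfl⟩
    let ε' : P 1 ⟶ N := ModuleCat.ofHom ((d 0).hom.codRestrict (LinearMap.ker ε.hom) hmem)
    have hε'surj : Function.Surjective ⇑ε' := by
      rintro ⟨y, hy⟩
      obtain ⟨x, hx⟩ := (hex0 y).mp hy
      exact ⟨x, Subtype.ext hx⟩
    have hex0' : Function.Exact ⇑(d 1) ⇑ε' := by
      intro y
      constructor
      · intro hy
        exact (hex 0 y).mp (congrArg Subtype.val hy)
      · intro hy
        exact Subtype.ext ((hex 0 y).mpr hy)
    have hN := ih N (fun i => P (i + 1)) (fun i => hproj (i + 1))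
      (fun i hi => hbound (i + 1) (Nat.succ_le_succ hi))
      (fun i => d (i + 1)) ε' hε'surj hex0' (fun i => hex (i + 1))
    have : Module.Projective R (P 0) := hproj 0
    have : Module.Flat R (P 0) := inferInstance
    have hP0 := fun i => aux_flat_exactAt K (P 0) (hacyclic i)
    exact aux_tensor_ses K hflat f ε w hS hN hP0

end Aux

/-- Let `C` (= `K`) be an acyclic chain complex of flat `R`-modules, and let
`M` be an `R`-module admitting a finite projective resolution
`0 → Pₙ → ⋯ → P₁ → M → 0`.  Then `C ⊗_R M` is acyclic.

The resolution is encoded by modules `P 0, P 1, …` (with `P i = 0` for `i ≥ n`, so the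
resolution is finite), projective, with differentials `d i : P (i+1) ⟶ P i` and an
augmentation `ε : P 0 ⟶ M`, exact everywhere and with `ε` surjective. -/
theorem stmt1 {R : Type} [CommRing R] {ι : Type} (c : ComplexShape ι)
    (K : HomologicalComplex (ModuleCat R) c)
    (hflat : ∀ i : ι, Module.Flat R (K.X i))
    (hacyclic : ∀ i : ι, K.ExactAt i)
    (M : ModuleCat R)
    (n : ℕ) (hn : 1 ≤ n) (P : ℕ → ModuleCat R)
    (hproj : ∀ i, Module.Projective R (P i))
    (hbound : ∀ i, n ≤ i → Subsingleton (P i))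
    (d : ∀ i, P (i + 1) ⟶ P i) (ε : P 0 ⟶ M)
    (hεsurj : Function.Surjective ⇑ε)
    (hex0 : Function.Exact ⇑(d 0) ⇑ε)
    (hex : ∀ i, Function.Exact ⇑(d (i + 1)) ⇑(d i)) :
    ∀ i : ι, (((tensorRight M).mapHomologicalComplex c).obj K).ExactAt i :=
  aux_key K hflat hacyclic n M P hproj hbound d ε hεsurj hex0 hex
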